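/- arXiv:1308.6594 — 2 statements merged into one kernel-verified Lean document; each statement's English description precedes it below -/
import Mathlib

section
/- Consider the projected gradient (PG) algorithm with constant stepsizes γ_k = α/L for all k = 1, …, N: given x₁ ∈ X, iteratively define x_{k+1} as a minimizer over u ∈ X of ⟨∇f(x_k), u⟩ + (L/α)V(u, x_k) + h(u) (each step satisfying its first-order optimality condition), and set g_{X,k} = (L/α)(x_k − x_{k+1}). Let R ∈ {1, …, N} attain the minimum of ‖g_{X,k}‖ over k = 1, …, N. Then ‖g_{X,R}‖² ≤ 2L²D_Ψ²/(α²N), where D_Ψ = ((Ψ(x₁) − Ψ*)/L)^{1/2}. -/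
open RealInnerProductSpace

lemma descent_lemma {E : Type*} [NormedAddCommGroup E] [InnerProductSpace ℝ E] [CompleteSpace E]
    {X : Set E} (hXcv : Convex ℝ X)
    {f : E → ℝ} {f' : E → E} (hf' : ∀ x ∈ X, HasGradientAt f (f' x) x)
    {L : ℝ}
    (hLip : ∀ x ∈ X, ∀ y ∈ X, ‖f' y - f' x‖ ≤ L * ‖y - x‖)
    {x y : E} (hx : x ∈ X) (hy : y ∈ X) :
    f y ≤ f x + ⟪f' x, y - x⟫ + L / 2 * ‖y - x‖ ^ 2 := by
  set d := y - x with hd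
  set φ : ℝ → ℝ := fun t => f (x + t • d) - t * ⟪f' x, d⟫ - L / 2 * t ^ 2 * ‖d‖ ^ 2 with hφ
  have hmem : ∀ t ∈ Set.Icc (0:ℝ) 1, x + t • d ∈ X := by
    intro t ht
    have := hXcv hx hy (by linarith [ht.2] : (0:ℝ) ≤ 1 - t) ht.1 (by ring)
    convert this using 1
    simp [hd]; module
  have hderiv : ∀ t ∈ Set.Icc (0:ℝ) 1,
      HasDerivAt φ (⟪f' (x + t • d), d⟫ - ⟪f' x, d⟫ - L * t * ‖d‖ ^ 2) t := by
    intro t ht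
    have hline : HasDerivAt (fun s : ℝ => x + s • d) d t := by
      simpa using ((hasDerivAt_id t).smul_const d).const_add x
    have h1 : HasDerivAt (fun s : ℝ => f (x + s • d)) ⟪f' (x + t • d), d⟫ t := by
      have := ((hf' _ (hmem t ht)).hasFDerivAt).comp_hasDerivAt t hline
      simp at this
      exact this
    have h2 : HasDerivAt (fun s : ℝ => s * ⟪f' x, d⟫) ⟪f' x, d⟫ t := by
      simpa using (hasDerivAt_id t).mul_const ⟪f' x, d⟫
    have h3 : HasDerivAt (fun s : ℝ => L / 2 * s ^ 2 * ‖d‖ ^ 2) (L * t * ‖d‖ ^ 2) t := by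
      have := ((hasDerivAt_pow 2 t).const_mul (L / 2)).mul_const (‖d‖ ^ 2)
      exact this.congr_deriv (by ring)
    exact (h1.sub h2).sub h3
  have hanti : AntitoneOn φ (Set.Icc 0 1) := by
    apply antitoneOn_of_deriv_nonpos (convex_Icc 0 1)
    · intro t ht
      exact (hderiv t ht).continuousAt.continuousWithinAt
    · intro t ht
      rw [interior_Icc] at ht
      exact (hderiv t (Set.mem_Icc_of_Ioo ht)).differentiableAt.differentiableWithinAt
    · intro t ht
      rw [interior_Icc] at ht
      have ht' := Set.mem_Icc_of_Ioo ht
      rw [(hderiv t ht').deriv]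
      have hb : ⟪f' (x + t • d) - f' x, d⟫ ≤ L * t * ‖d‖ ^ 2 := by
        calc ⟪f' (x + t • d) - f' x, d⟫ ≤ ‖f' (x + t • d) - f' x‖ * ‖d‖ :=
              real_inner_le_norm _ _
          _ ≤ (L * ‖(x + t • d) - x‖) * ‖d‖ := by
              gcongr; exact hLip x hx _ (hmem t ht')
          _ = L * t * ‖d‖ ^ 2 := by
              simp [norm_smul, abs_of_nonneg ht.1.le]; ring
      rw [inner_sub_left] at hb
      linarith
  have h01 := hanti (Set.left_mem_Icc.2 zero_le_one) (Set.right_mem_Icc.2 zero_le_one) zero_le_one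
  simp only [hφ] at h01
  norm_num at h01
  have : x + d = y := by simp [hd]
  rw [this] at h01
  linarith

/-- Corollary 3.2: the PG algorithm with constant stepsizes `γ_k = α/L` satisfies
`‖g_{X,R}‖² ≤ 2L²D_Ψ²/(α²N)` where `D_Ψ² = (Ψ(x₁) - Ψ*)/L` and
`g_{X,k} = (L/α)(x_k - x_{k+1})`. -/
theorem projected_gradient_algorithm_constant_stepsize
    {E : Type*} [NormedAddCommGroup E] [InnerProductSpace ℝ E] [FiniteDimensional ℝ E]
    (X : Set E) (hXne : X.Nonempty) (hXcl : IsClosed X) (hXcv : Convex ℝ X)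
    (h : E → ℝ) (hh : ConvexOn ℝ X h)
    (w : E → ℝ) (gw : E → E) (hgw : ∀ x ∈ X, HasGradientAt w (gw x) x)
    (α : ℝ) (hα : 0 < α)
    (hsc : ∀ x ∈ X, ∀ z ∈ X, α * ‖x - z‖ ^ 2 ≤ ⟪x - z, gw x - gw z⟫)
    (f : E → ℝ) (f' : E → E) (hf' : ∀ x ∈ X, HasGradientAt f (f' x) x)
    (L : ℝ) (hL : 0 < L)
    (hLip : ∀ x ∈ X, ∀ y ∈ X, ‖f' y - f' x‖ ≤ L * ‖y - x‖)
    -- Ψ* = inf_{x ∈ X} (f + h)(x) is finite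
    (Ψstar : ℝ) (hΨstar : IsGLB ((fun z => f z + h z) '' X) Ψstar)
    (N : ℕ) (hN : 1 ≤ N)
    (x : ℕ → E) (hx1 : x 1 ∈ X)
    (hxX : ∀ k ∈ Finset.Icc 1 N, x (k + 1) ∈ X)
    -- x_{k+1} is a minimizer over u ∈ X of ⟨∇f(x_k), u⟩ + (L/α) V(u, x_k) + h(u)
    (hmin : ∀ k ∈ Finset.Icc 1 N, ∀ u ∈ X,
      ⟪f' (x k), x (k + 1)⟫
          + (L / α) * (w (x (k + 1)) - w (x k) - ⟪gw (x k), x (k + 1) - x k⟫)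
          + h (x (k + 1)) ≤
        ⟪f' (x k), u⟫ + (L / α) * (w u - w (x k) - ⟪gw (x k), u - x k⟫) + h u)
    -- each step satisfies the first-order optimality condition with some p_k ∈ ∂h(x_{k+1})
    (hopt : ∀ k ∈ Finset.Icc 1 N, ∃ p : E,
      (∀ u ∈ X, h (x (k + 1)) + ⟪p, u - x (k + 1)⟫ ≤ h u) ∧
      (∀ u ∈ X, 0 ≤ ⟪f' (x k) + (L / α) • (gw (x (k + 1)) - gw (x k)) + p, u - x (k + 1)⟫))
    -- g_{X,k} = (L/α)(x_k - x_{k+1}), and R attains the minimum of ‖g_{X,k}‖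
    (R : ℕ) (hR : R ∈ Finset.Icc 1 N)
    (hRmin : ∀ k ∈ Finset.Icc 1 N,
      ‖(L / α) • (x R - x (R + 1))‖ ≤ ‖(L / α) • (x k - x (k + 1))‖) :
    ‖(L / α) • (x R - x (R + 1))‖ ^ 2 ≤
      2 * L ^ 2 * ((f (x 1) + h (x 1) - Ψstar) / L) / (α ^ 2 * N) := by
  have hNpos : (0:ℝ) < N := by exact_mod_cast hN
  have hLα : (0:ℝ) < L / α := div_pos hL hα
  set Ψ : E → ℝ := fun z => f z + h z with hΨ
  set G : ℝ := ‖(L / α) • (x R - x (R + 1))‖ ^ 2 with hG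
  -- membership of iterates
  have hXk : ∀ k ∈ Finset.Icc 1 N, x k ∈ X := by
    intro k hk
    rw [Finset.mem_Icc] at hk
    obtain ⟨m, rfl⟩ := Nat.exists_eq_add_of_le hk.1
    cases m with
    | zero => simpa using hx1
    | succ j =>
        have : (1 + j) + 1 = 1 + (j + 1) := by omega
        rw [← this]
        exact hxX (1 + j) (Finset.mem_Icc.2 ⟨by omega, by omega⟩)
  -- per-step decrease
  have hstep : ∀ k ∈ Finset.Icc 1 N,
      Ψ (x (k + 1)) + L / 2 * ‖x k - x (k + 1)‖ ^ 2 ≤ Ψ (x k) := by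
    intro k hk
    obtain ⟨p, hp, hfo⟩ := hopt k hk
    have hxk := hXk k hk
    have hxk1 := hxX k hk
    have h1 := hfo (x k) hxk
    rw [inner_add_left, inner_add_left, real_inner_smul_left] at h1
    have h2 : ⟪gw (x (k + 1)) - gw (x k), x k - x (k + 1)⟫
        ≤ -(α * ‖x k - x (k + 1)‖ ^ 2) := by
      have hs := hsc (x (k + 1)) hxk1 (x k) hxk
      have e1 : x k - x (k + 1) = -(x (k + 1) - x k) := by abel
      rw [e1, inner_neg_right, norm_neg, real_inner_comm]
      linarith
    have h2' : L / α * ⟪gw (x (k + 1)) - gw (x k), x k - x (k + 1)⟫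
        ≤ -(L * ‖x k - x (k + 1)‖ ^ 2) := by
      calc L / α * ⟪gw (x (k + 1)) - gw (x k), x k - x (k + 1)⟫
          ≤ L / α * -(α * ‖x k - x (k + 1)‖ ^ 2) :=
            mul_le_mul_of_nonneg_left h2 hLα.le
        _ = -(L * ‖x k - x (k + 1)‖ ^ 2) := by
            field_simp
    have h3 := hp (x k) hxk
    have hdesc := descent_lemma hXcv hf' hLip hxk hxk1
    have e2 : ⟪f' (x k), x (k + 1) - x k⟫ = -⟪f' (x k), x k - x (k + 1)⟫ := by
      rw [← inner_neg_right]; congr 1; abel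
    have e3 : ‖x (k + 1) - x k‖ = ‖x k - x (k + 1)‖ := norm_sub_rev _ _
    rw [e2, e3] at hdesc
    simp only [hΨ]
    linarith
  -- bound each step's decrease from below by the minimal gradient mapping norm
  have hGk : ∀ k ∈ Finset.Icc 1 N,
      α ^ 2 / (2 * L) * G ≤ Ψ (x k) - Ψ (x (k + 1)) := by
    intro k hk
    have h1 := hRmin k hk
    have h2 : G ≤ ‖(L / α) • (x k - x (k + 1))‖ ^ 2 := by
      rw [hG]; exact pow_le_pow_left₀ (norm_nonneg _) h1 2
    rw [norm_smul, Real.norm_eq_abs, abs_of_pos hLα] at h2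
    have h3 := hstep k hk
    have h4 : α ^ 2 / (2 * L) * G ≤ L / 2 * ‖x k - x (k + 1)‖ ^ 2 := by
      have h5 : α ^ 2 / (2 * L) * (L / α * ‖x k - x (k + 1)‖) ^ 2
          = L / 2 * ‖x k - x (k + 1)‖ ^ 2 := by
        field_simp
      calc α ^ 2 / (2 * L) * G ≤ α ^ 2 / (2 * L) * (L / α * ‖x k - x (k + 1)‖) ^ 2 := by
            apply mul_le_mul_of_nonneg_left h2 (by positivity)
        _ = L / 2 * ‖x k - x (k + 1)‖ ^ 2 := h5
    linarith
  -- telescoping sum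
  have htel : ∑ k ∈ Finset.Icc 1 N, (Ψ (x k) - Ψ (x (k + 1))) = Ψ (x 1) - Ψ (x (N + 1)) := by
    rw [← Finset.Ico_add_one_right_eq_Icc, Finset.sum_Ico_eq_sum_range]
    have := Finset.sum_range_sub' (fun i => Ψ (x (1 + i))) N
    convert this using 2 with i
    · simp
    · rfl
    rw [Nat.add_comm N 1]
  have hsum : (N : ℝ) * (α ^ 2 / (2 * L) * G) ≤ Ψ (x 1) - Ψ (x (N + 1)) := by
    calc (N : ℝ) * (α ^ 2 / (2 * L) * G)
        = ∑ _k ∈ Finset.Icc 1 N, α ^ 2 / (2 * L) * G := by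
          rw [Finset.sum_const, Nat.card_Icc, Nat.add_sub_cancel, nsmul_eq_mul]
      _ ≤ ∑ k ∈ Finset.Icc 1 N, (Ψ (x k) - Ψ (x (k + 1))) := Finset.sum_le_sum hGk
      _ = Ψ (x 1) - Ψ (x (N + 1)) := htel
  have hlow : Ψstar ≤ Ψ (x (N + 1)) :=
    hΨstar.1 ⟨x (N + 1), hxX N (Finset.mem_Icc.2 ⟨hN, le_refl N⟩), rfl⟩
  clear_value Ψ G
  -- final algebra
  have hkey : G * (α ^ 2 * N) ≤ 2 * L * (Ψ (x 1) - Ψstar) := by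
    have h6 : (N : ℝ) * (α ^ 2 / (2 * L) * G) ≤ Ψ (x 1) - Ψstar := by
      linarith [hsum, hlow]
    have := mul_le_mul_of_nonneg_left h6 (by positivity : (0:ℝ) ≤ 2 * L)
    calc G * (α ^ 2 * N) = 2 * L * ((N : ℝ) * (α ^ 2 / (2 * L) * G)) := by
          field_simp
      _ ≤ 2 * L * (Ψ (x 1) - Ψstar) := this
  rw [le_div_iff₀ (by positivity : (0:ℝ) < α ^ 2 * N)]
  have : 2 * L ^ 2 * ((f (x 1) + h (x 1) - Ψstar) / L) = 2 * L * (Ψ (x 1) - Ψstar) := by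
    field_simp [hΨ]; simp only [hΨ]
  rw [this]
  exact hkey
end

section
/- Consider the RSPG algorithm as in Theorem 4.1(a) with constant stepsizes γ_k = α/(2L) for all k = 1, …, N, constant batch sizes m_k = m ≥ 1 (so E[δ_k | ξ_{[k−1]}] = 0 and E[‖δ_k‖²] ≤ σ²/m), each step satisfying its first-order optimality condition, and R uniform on {1, …, N} independent of the process. Then E[‖g_{X,R}‖²] ≤ 8L²D_Ψ²/(α²N) + 6σ²/(α²m) and E[‖g̃_{X,R}‖²] ≤ 4L²D_Ψ²/(α²N) + 2σ²/(α²m), where g̃_{X,k} = (x_k − x_{k+1})/γ_k, g_{X,k} = P_X(x_k, ∇f(x_k), γ_k) (the exact-gradient generalized projected gradient, assumed to satisfy its first-order optimality condition), and D_Ψ = ((Ψ(x₁) − Ψ*)/L)^{1/2}. -/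
set_option maxHeartbeats 1000000


open MeasureTheory RealInnerProductSpace

lemma rspg_descent {E : Type*} [NormedAddCommGroup E] [InnerProductSpace ℝ E] [CompleteSpace E]
    {X : Set E} (hXcv : Convex ℝ X) {f : E → ℝ} {f' : E → E}
    (hf' : ∀ z ∈ X, HasGradientAt f (f' z) z) {L : ℝ} (hL : 0 < L)
    (hLip : ∀ a ∈ X, ∀ b ∈ X, ‖f' b - f' a‖ ≤ L * ‖b - a‖)
    {x y : E} (hx : x ∈ X) (hy : y ∈ X) :
    f y ≤ f x + ⟪f' x, y - x⟫ + L / 2 * ‖y - x‖ ^ 2 := by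
  set v := y - x with hv
  have hmem : ∀ t ∈ Set.Icc (0:ℝ) 1, x + t • v ∈ X := fun t ht =>
    hXcv.add_smul_sub_mem hx hy ht
  set g : ℝ → ℝ := fun t => f (x + t • v) - t * ⟪f' x, v⟫ - L / 2 * t ^ 2 * ‖v‖ ^ 2 with hg
  have hline : ∀ t : ℝ, HasDerivAt (fun s : ℝ => x + s • v) v t := by
    intro t
    simpa using ((hasDerivAt_id t).smul_const v).const_add x
  have hgd : ∀ t ∈ Set.Icc (0:ℝ) 1, HasDerivAt g
      (⟪f' (x + t • v), v⟫ - ⟪f' x, v⟫ - L * t * ‖v‖ ^ 2) t := by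
    intro t ht
    have h1 : HasDerivAt (fun s : ℝ => f (x + s • v)) (⟪f' (x + t • v), v⟫) t := by
      have := ((hf' _ (hmem t ht)).hasFDerivAt.comp_hasDerivAt t (hline t))
      simpa [InnerProductSpace.toDual_apply_apply, Function.comp_def] using this
    have h2 : HasDerivAt (fun s : ℝ => s * ⟪f' x, v⟫) (⟪f' x, v⟫) t := by
      simpa using (hasDerivAt_id t).mul_const (⟪f' x, v⟫)
    have h3 : HasDerivAt (fun s : ℝ => L / 2 * s ^ 2 * ‖v‖ ^ 2)
        (L * t * ‖v‖ ^ 2) t := by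
      have := ((hasDerivAt_pow 2 t).const_mul (L / 2)).mul_const (‖v‖ ^ 2)
      refine this.congr_deriv ?_
      ring
    exact (h1.sub h2).sub h3
  have hanti : AntitoneOn g (Set.Icc (0:ℝ) 1) := by
    apply antitoneOn_of_deriv_nonpos (convex_Icc 0 1)
    · exact fun t ht => ((hgd t ht).continuousAt.continuousWithinAt)
    · intro t ht
      rw [interior_Icc] at ht
      exact ((hgd t (Set.mem_Icc_of_Ioo ht)).differentiableAt).differentiableWithinAt
    · intro t ht
      rw [interior_Icc] at ht
      rw [(hgd t (Set.mem_Icc_of_Ioo ht)).deriv]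
      have hb : ⟪f' (x + t • v) - f' x, v⟫ ≤ L * t * ‖v‖ ^ 2 := by
        calc ⟪f' (x + t • v) - f' x, v⟫ ≤ ‖f' (x + t • v) - f' x‖ * ‖v‖ :=
              real_inner_le_norm _ _
          _ ≤ (L * ‖(x + t • v) - x‖) * ‖v‖ :=
              mul_le_mul_of_nonneg_right
                (hLip x hx _ (hmem t ⟨ht.1.le, ht.2.le⟩)) (norm_nonneg _)
          _ = L * t * ‖v‖ ^ 2 := by
              rw [add_sub_cancel_left, norm_smul, Real.norm_eq_abs, abs_of_nonneg ht.1.le]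
              ring
      rw [inner_sub_left] at hb
      linarith
  have h01 := hanti (Set.left_mem_Icc.mpr zero_le_one) (Set.right_mem_Icc.mpr zero_le_one) zero_le_one
  simp only [hg, zero_smul, add_zero, one_smul, zero_pow, one_pow] at h01
  have hxy : x + v = y := by simp [hv]
  rw [hxy] at h01
  nlinarith [h01]



open MeasureTheory RealInnerProductSpace

/-- Corollary 4.3 (constant stepsizes `γ_k = α/(2L)`, constant batch size `m`, uniform `R`):
`E[‖g_{X,R}‖²] ≤ 8L²D_Ψ²/(α²N) + 6σ²/(α²m)` and
`E[‖g̃_{X,R}‖²] ≤ 4L²D_Ψ²/(α²N) + 2σ²/(α²m)`. The expectation over the independent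
uniform random index `R` is written out as a weighted sum. -/
theorem rspg_constant_stepsize_bound
    {E : Type*} [NormedAddCommGroup E] [InnerProductSpace ℝ E] [FiniteDimensional ℝ E]
    [MeasurableSpace E] [BorelSpace E]
    {Ω : Type*} {mΩ : MeasurableSpace Ω} (μ : Measure Ω) [IsProbabilityMeasure μ]
    (ℱ : Filtration ℕ mΩ)
    (X : Set E) (hXne : X.Nonempty) (hXcl : IsClosed X) (hXcv : Convex ℝ X)
    (h : E → ℝ) (hh : ConvexOn ℝ X h)
    (w : E → ℝ) (gw : E → E) (hgw : ∀ x ∈ X, HasGradientAt w (gw x) x)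
    (α : ℝ) (hα : 0 < α)
    (hsc : ∀ x ∈ X, ∀ z ∈ X, α * ‖x - z‖ ^ 2 ≤ ⟪x - z, gw x - gw z⟫)
    (f : E → ℝ) (f' : E → E) (hf' : ∀ x ∈ X, HasGradientAt f (f' x) x)
    (L : ℝ) (hL : 0 < L)
    (hLip : ∀ x ∈ X, ∀ y ∈ X, ‖f' y - f' x‖ ≤ L * ‖y - x‖)
    -- Ψ* = inf_{x ∈ X} (f + h)(x) is finite
    (Ψstar : ℝ) (hΨstar : IsGLB ((fun z => f z + h z) '' X) Ψstar)
    (N : ℕ) (hN : 1 ≤ N)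
    (m : ℕ) (hm : 1 ≤ m) (σ : ℝ)
    -- random iterates and stochastic errors
    (x : ℕ → Ω → E) (x₁ : E) (hx₁ : ∀ ωp, x 1 ωp = x₁) (hx₁X : x₁ ∈ X)
    (δ : ℕ → Ω → E)
    (hxmeas : ∀ k ∈ Finset.Icc 1 N, StronglyMeasurable[ℱ (k - 1)] (x k))
    (hxmeas' : ∀ k ∈ Finset.Icc 1 N, StronglyMeasurable[ℱ k] (x (k + 1)))
    (hδL2 : ∀ k ∈ Finset.Icc 1 N, MemLp (δ k) 2 μ)
    -- E[δ_k | ξ_{[k-1]}] = 0 and E[‖δ_k‖²] ≤ σ²/m_k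
    (hδcond : ∀ k ∈ Finset.Icc 1 N, μ[δ k | ℱ (k - 1)] =ᵐ[μ] 0)
    (hδvar : ∀ k ∈ Finset.Icc 1 N, ∫ ωp, ‖δ k ωp‖ ^ 2 ∂μ ≤ σ ^ 2 / m)
    (hxX : ∀ k ∈ Finset.Icc 1 N, ∀ ωp, x (k + 1) ωp ∈ X)
    -- x_{k+1} = argmin_{u ∈ X} ⟨G_k, u⟩ + (1/γ_k)V(u, x_k) + h(u), G_k = ∇f(x_k) + δ_k
    (hmin : ∀ k ∈ Finset.Icc 1 N, ∀ ωp, ∀ u ∈ X,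
      ⟪f' (x k ωp) + δ k ωp, x (k + 1) ωp⟫
          + (1 / (α / (2 * L))) * (w (x (k + 1) ωp) - w (x k ωp) - ⟪gw (x k ωp), x (k + 1) ωp - x k ωp⟫)
          + h (x (k + 1) ωp) ≤
        ⟪f' (x k ωp) + δ k ωp, u⟫
          + (1 / (α / (2 * L))) * (w u - w (x k ωp) - ⟪gw (x k ωp), u - x k ωp⟫) + h u)
    (hopt : ∀ k ∈ Finset.Icc 1 N, ∀ ωp, ∃ p : E,
      (∀ u ∈ X, h (x (k + 1) ωp) + ⟪p, u - x (k + 1) ωp⟫ ≤ h u) ∧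
      (∀ u ∈ X, 0 ≤ ⟪(f' (x k ωp) + δ k ωp)
          + (1 / (α / (2 * L))) • (gw (x (k + 1) ωp) - gw (x k ωp)) + p, u - x (k + 1) ωp⟫))
    -- xe_k is the generalized projection at x_k with the exact gradient ∇f(x_k),
    -- so that g_{X,k} = P_X(x_k, ∇f(x_k), γ_k) = (x_k - xe_k)/γ_k
    (xe : ℕ → Ω → E)
    (hxeX : ∀ k ∈ Finset.Icc 1 N, ∀ ωp, xe k ωp ∈ X)
    (hmine : ∀ k ∈ Finset.Icc 1 N, ∀ ωp, ∀ u ∈ X,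
      ⟪f' (x k ωp), xe k ωp⟫
          + (1 / (α / (2 * L))) * (w (xe k ωp) - w (x k ωp) - ⟪gw (x k ωp), xe k ωp - x k ωp⟫)
          + h (xe k ωp) ≤
        ⟪f' (x k ωp), u⟫
          + (1 / (α / (2 * L))) * (w u - w (x k ωp) - ⟪gw (x k ωp), u - x k ωp⟫) + h u)
    (hopte : ∀ k ∈ Finset.Icc 1 N, ∀ ωp, ∃ p : E,
      (∀ u ∈ X, h (xe k ωp) + ⟪p, u - xe k ωp⟫ ≤ h u) ∧
      (∀ u ∈ X, 0 ≤ ⟪f' (x k ωp)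
          + (1 / (α / (2 * L))) • (gw (xe k ωp) - gw (x k ωp)) + p, u - xe k ωp⟫)) :
    (∑ k ∈ Finset.Icc 1 N, (1 / (N : ℝ)) *
        ∫ ωp, ‖(1 / (α / (2 * L))) • (x k ωp - xe k ωp)‖ ^ 2 ∂μ ≤
      8 * L ^ 2 * ((f x₁ + h x₁ - Ψstar) / L) / (α ^ 2 * N) + 6 * σ ^ 2 / (α ^ 2 * m)) ∧
    ∑ k ∈ Finset.Icc 1 N, (1 / (N : ℝ)) *
        ∫ ωp, ‖(1 / (α / (2 * L))) • (x k ωp - x (k + 1) ωp)‖ ^ 2 ∂μ ≤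
      4 * L ^ 2 * ((f x₁ + h x₁ - Ψstar) / L) / (α ^ 2 * N) + 2 * σ ^ 2 / (α ^ 2 * m) := by
  classical
  set c : ℝ := 1 / (α / (2 * L)) with hcdef
  have hc : c = 2 * L / α := one_div_div α (2 * L)
  have hc0 : 0 ≤ c := by rw [hc]; positivity
  have hcα : c * α = 2 * L := by rw [hc]; field_simp
  have hc2 : c ^ 2 = 4 * L ^ 2 / α ^ 2 := by rw [hc, div_pow]; ring_nf
  set B : ℝ := f x₁ + h x₁ - Ψstar with hBdef
  have hΨlb : ∀ z ∈ X, Ψstar ≤ f z + h z := fun z hz => hΨstar.1 ⟨z, hz, rfl⟩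
  have hB0 : 0 ≤ B := by have := hΨlb x₁ hx₁X; simp only [hBdef]; linarith
  have hNpos : (0:ℝ) < N := by exact_mod_cast Nat.lt_of_lt_of_le Nat.zero_lt_one hN
  have hmpos : (0:ℝ) < m := by exact_mod_cast Nat.lt_of_lt_of_le Nat.zero_lt_one hm
  have hxkX : ∀ k ∈ Finset.Icc 1 N, ∀ ωp, x k ωp ∈ X := by
    intro k hk ωp
    rw [Finset.mem_Icc] at hk
    rcases Nat.eq_or_lt_of_le hk.1 with h1 | h1
    · rw [← h1, hx₁]; exact hx₁X
    · have hkm : k - 1 ∈ Finset.Icc 1 N := Finset.mem_Icc.mpr ⟨by omega, by omega⟩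
      simpa [show k - 1 + 1 = k by omega] using hxX (k - 1) hkm ωp
  -- per-step descent inequality (A)
  have hA : ∀ k ∈ Finset.Icc 1 N, ∀ ωp,
      L * ‖x k ωp - x (k + 1) ωp‖ ^ 2 ≤
        (f (x k ωp) + h (x k ωp)) - (f (x (k + 1) ωp) + h (x (k + 1) ωp))
          + ‖δ k ωp‖ ^ 2 / (2 * L) := by
    intro k hk ωp
    set a := x k ωp with ha
    set b := x (k + 1) ωp with hb
    set d := δ k ωp with hd
    have haX : a ∈ X := hxkX k hk ωp
    have hbX : b ∈ X := hxX k hk ωp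
    obtain ⟨p, hp, hvi⟩ := hopt k hk ωp
    have h0 := hvi a haX
    simp only [inner_add_left, real_inner_smul_left] at h0
    -- h0 : 0 ≤ ⟪f' a, a - b⟫ + ⟪d, a - b⟫ + c * ⟪gw b - gw a, a - b⟫ + ⟪p, a - b⟫
    have hsc1 : ⟪gw b - gw a, a - b⟫ ≤ -(α * ‖a - b‖ ^ 2) := by
      have h1 := hsc b hbX a haX
      have he1 : ⟪gw b - gw a, a - b⟫ = -⟪b - a, gw b - gw a⟫ := by
        rw [real_inner_comm, show (a - b : E) = -(b - a) from (neg_sub b a).symm,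
          inner_neg_left]
      have he2 : ‖b - a‖ = ‖a - b‖ := norm_sub_rev _ _
      rw [he1]
      rw [he2] at h1
      linarith
    have hm1 : c * ⟪gw b - gw a, a - b⟫ ≤ -(2 * L * ‖a - b‖ ^ 2) := by
      calc c * ⟪gw b - gw a, a - b⟫ ≤ c * -(α * ‖a - b‖ ^ 2) :=
            mul_le_mul_of_nonneg_left hsc1 hc0
        _ = -((c * α) * ‖a - b‖ ^ 2) := by ring
        _ = -(2 * L * ‖a - b‖ ^ 2) := by rw [hcα]
    have hpb : ⟪p, a - b⟫ ≤ h a - h b := by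
      have := hp a haX; linarith
    have hdesc : f b ≤ f a + ⟪f' a, b - a⟫ + L / 2 * ‖b - a‖ ^ 2 :=
      rspg_descent hXcv hf' hL hLip haX hbX
    have hfab : ⟪f' a, b - a⟫ = -⟪f' a, a - b⟫ := by
      rw [show (b - a : E) = -(a - b) from (neg_sub a b).symm, inner_neg_right]
    have hnab : ‖b - a‖ = ‖a - b‖ := norm_sub_rev _ _
    rw [hfab, hnab] at hdesc
    have hcauchy : ⟪d, a - b⟫ ≤ ‖d‖ * ‖a - b‖ := real_inner_le_norm _ _
    have hy1 : 2 * L * (‖d‖ * ‖a - b‖) ≤ L ^ 2 * ‖a - b‖ ^ 2 + ‖d‖ ^ 2 := by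
      nlinarith [sq_nonneg (‖d‖ - L * ‖a - b‖)]
    have hy2 : ‖d‖ * ‖a - b‖ ≤ (L ^ 2 * ‖a - b‖ ^ 2 + ‖d‖ ^ 2) / (2 * L) := by
      rw [le_div_iff₀ (by positivity)]; linarith
    have hy3 : (L ^ 2 * ‖a - b‖ ^ 2 + ‖d‖ ^ 2) / (2 * L)
        = L / 2 * ‖a - b‖ ^ 2 + ‖d‖ ^ 2 / (2 * L) := by
      field_simp
    have hyoung : ⟪d, a - b⟫ ≤ L / 2 * ‖a - b‖ ^ 2 + ‖d‖ ^ 2 / (2 * L) := by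
      rw [hy3] at hy2; linarith
    linarith [h0, hm1, hpb, hdesc, hyoung]
  -- Lemma-2-type bound (B)
  have hB2 : ∀ k ∈ Finset.Icc 1 N, ∀ ωp,
      4 * L ^ 2 * ‖xe k ωp - x (k + 1) ωp‖ ^ 2 ≤ ‖δ k ωp‖ ^ 2 := by
    intro k hk ωp
    set a := x k ωp with ha
    set b := x (k + 1) ωp with hb
    set e := xe k ωp with he
    set d := δ k ωp with hd
    have haX : a ∈ X := hxkX k hk ωp
    have hbX : b ∈ X := hxX k hk ωp
    have heX : e ∈ X := hxeX k hk ωp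
    obtain ⟨p, hp, hvi⟩ := hopt k hk ωp
    obtain ⟨q, hq, hvie⟩ := hopte k hk ωp
    have h1 := hvi e heX
    have h2 := hvie b hbX
    simp only [inner_add_left, real_inner_smul_left] at h1 h2
    have hkey : ⟪gw b - gw a, e - b⟫ + ⟪gw e - gw a, b - e⟫ = ⟪gw b - gw e, e - b⟫ := by
      rw [show (b - e : E) = -(e - b) from (neg_sub e b).symm, inner_neg_right,
        ← sub_eq_add_neg, ← inner_sub_left]
      congr 1
      abel
    have hckey : c * ⟪gw b - gw a, e - b⟫ + c * ⟪gw e - gw a, b - e⟫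
        = c * ⟪gw b - gw e, e - b⟫ := by rw [← mul_add, hkey]
    have hsc2 : ⟪gw b - gw e, e - b⟫ ≤ -(α * ‖e - b‖ ^ 2) := by
      have h3 := hsc b hbX e heX
      have he1 : ⟪gw b - gw e, e - b⟫ = -⟪b - e, gw b - gw e⟫ := by
        rw [real_inner_comm, show (e - b : E) = -(b - e) from (neg_sub b e).symm,
          inner_neg_left]
      have he2 : ‖b - e‖ = ‖e - b‖ := norm_sub_rev _ _
      rw [he1]
      rw [he2] at h3
      linarith
    have hm1 : c * ⟪gw b - gw e, e - b⟫ ≤ -(2 * L * ‖e - b‖ ^ 2) := by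
      calc c * ⟪gw b - gw e, e - b⟫ ≤ c * -(α * ‖e - b‖ ^ 2) :=
            mul_le_mul_of_nonneg_left hsc2 hc0
        _ = -((c * α) * ‖e - b‖ ^ 2) := by ring
        _ = -(2 * L * ‖e - b‖ ^ 2) := by rw [hcα]
    have hfe : ⟪f' a, b - e⟫ = -⟪f' a, e - b⟫ := by
      rw [show (b - e : E) = -(e - b) from (neg_sub e b).symm, inner_neg_right]
    rw [hfe] at h2
    have hpe : ⟪p, e - b⟫ ≤ h e - h b := by have := hp e heX; linarith
    have hqb : ⟪q, b - e⟫ ≤ h b - h e := by have := hq b hbX; linarith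
    have hcauchy : ⟪d, e - b⟫ ≤ ‖d‖ * ‖e - b‖ := real_inner_le_norm _ _
    have hkey2 : 2 * L * ‖e - b‖ ^ 2 ≤ ‖d‖ * ‖e - b‖ := by
      linarith [h1, h2, hckey, hm1, hpe, hqb, hcauchy]
    rcases eq_or_lt_of_le (norm_nonneg (e - b)) with hz | hz
    · rw [← hz]
      simp
    · have h2L : 2 * L * ‖e - b‖ ≤ ‖d‖ := by
        have hmm : (2 * L * ‖e - b‖) * ‖e - b‖ ≤ ‖d‖ * ‖e - b‖ := by
          have hrr : (2 * L * ‖e - b‖) * ‖e - b‖ = 2 * L * ‖e - b‖ ^ 2 := by ring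
          linarith [hkey2]
        exact le_of_mul_le_mul_right hmm hz
      have hsq := mul_le_mul h2L h2L (by positivity) (norm_nonneg d)
      have he1 : 4 * L ^ 2 * ‖e - b‖ ^ 2 = (2 * L * ‖e - b‖) * (2 * L * ‖e - b‖) := by ring
      have he2 : ‖d‖ * ‖d‖ = ‖d‖ ^ 2 := by ring
      linarith
  -- master pointwise inequality
  have hmaster : ∀ ωp, L * ∑ k ∈ Finset.Icc 1 N, ‖x k ωp - x (k + 1) ωp‖ ^ 2 ≤
      B + (∑ k ∈ Finset.Icc 1 N, ‖δ k ωp‖ ^ 2) / (2 * L) := by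
    intro ωp
    have hsum : ∑ k ∈ Finset.Icc 1 N, (L * ‖x k ωp - x (k + 1) ωp‖ ^ 2) ≤
        ∑ k ∈ Finset.Icc 1 N, (((f (x k ωp) + h (x k ωp))
          - (f (x (k + 1) ωp) + h (x (k + 1) ωp))) + ‖δ k ωp‖ ^ 2 / (2 * L)) :=
      Finset.sum_le_sum (fun k hk => by linarith [hA k hk ωp])
    have htel : ∑ k ∈ Finset.Icc 1 N, ((f (x k ωp) + h (x k ωp))
        - (f (x (k + 1) ωp) + h (x (k + 1) ωp)))
        = (f (x 1 ωp) + h (x 1 ωp)) - (f (x (N + 1) ωp) + h (x (N + 1) ωp)) := by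
      rw [← Finset.Ico_add_one_right_eq_Icc, Finset.sum_Ico_eq_sum_range]
      have htl := Finset.sum_range_sub' (fun i => f (x (1 + i) ωp) + h (x (1 + i) ωp)) N
      rw [Nat.add_comm 1 N] at htl
      exact htl
    have hfin : Ψstar ≤ f (x (N + 1) ωp) + h (x (N + 1) ωp) :=
      hΨlb _ (hxX N (Finset.mem_Icc.mpr ⟨hN, le_rfl⟩) ωp)
    rw [Finset.sum_add_distrib, htel, ← Finset.sum_div] at hsum
    rw [Finset.mul_sum]
    rw [hx₁ ωp] at hsum
    linarith [hsum, hfin, hBdef]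
  -- integrability of ‖δ k‖²
  have hδint : ∀ k ∈ Finset.Icc 1 N, Integrable (fun ωp => ‖δ k ωp‖ ^ 2) μ := fun k hk =>
    (memLp_two_iff_integrable_sq_norm (hδL2 k hk).aestronglyMeasurable).mp (hδL2 k hk)
  -- measurability of increments
  have hΔmeas : ∀ k ∈ Finset.Icc 1 N,
      AEStronglyMeasurable (fun ωp => ‖x k ωp - x (k + 1) ωp‖ ^ 2) μ := by
    intro k hk
    have h1 : StronglyMeasurable (fun ωp => x k ωp - x (k + 1) ωp) :=
      ((hxmeas k hk).mono (ℱ.le _)).sub ((hxmeas' k hk).mono (ℱ.le _))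
    exact (h1.norm.pow 2).aestronglyMeasurable
  -- dominating function
  set g0 : Ω → ℝ := fun ωp => (B + (∑ j ∈ Finset.Icc 1 N, ‖δ j ωp‖ ^ 2) / (2 * L)) / L
    with hg0def
  have hg0int : Integrable g0 μ := by
    apply Integrable.div_const
    exact (integrable_const B).add ((integrable_finset_sum _ (fun j hj => hδint j hj)).div_const _)
  have hbd : ∀ k ∈ Finset.Icc 1 N, ∀ ωp, ‖x k ωp - x (k + 1) ωp‖ ^ 2 ≤ g0 ωp := by
    intro k hk ωp
    have h1 : ‖x k ωp - x (k + 1) ωp‖ ^ 2 ≤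
        ∑ j ∈ Finset.Icc 1 N, ‖x j ωp - x (j + 1) ωp‖ ^ 2 :=
      Finset.single_le_sum (f := fun j => ‖x j ωp - x (j + 1) ωp‖ ^ 2)
        (fun j _ => by positivity) hk
    have h2 := hmaster ωp
    rw [hg0def, le_div_iff₀ hL]
    nlinarith [h1, h2]
  have hΔint : ∀ k ∈ Finset.Icc 1 N,
      Integrable (fun ωp => ‖x k ωp - x (k + 1) ωp‖ ^ 2) μ := by
    intro k hk
    apply hg0int.mono' (hΔmeas k hk)
    filter_upwards with ωp
    rw [Real.norm_eq_abs, abs_of_nonneg (by positivity)]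
    exact hbd k hk ωp
  -- T = sum of expected squared increments
  set T : ℝ := ∑ k ∈ Finset.Icc 1 N, ∫ ωp, ‖x k ωp - x (k + 1) ωp‖ ^ 2 ∂μ with hTdef
  have hT0 : 0 ≤ T := Finset.sum_nonneg fun k _ =>
    integral_nonneg fun ωp => by positivity
  have hTbound : L * T ≤ B + (N : ℝ) * (σ ^ 2 / m) / (2 * L) := by
    have h1 : T = ∫ ωp, (∑ k ∈ Finset.Icc 1 N, ‖x k ωp - x (k + 1) ωp‖ ^ 2) ∂μ :=
      (integral_finset_sum _ (fun k hk => hΔint k hk)).symm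
    have h2 : ∫ ωp, (L * ∑ k ∈ Finset.Icc 1 N, ‖x k ωp - x (k + 1) ωp‖ ^ 2) ∂μ ≤
        ∫ ωp, (B + (∑ k ∈ Finset.Icc 1 N, ‖δ k ωp‖ ^ 2) / (2 * L)) ∂μ := by
      apply integral_mono
      · exact (integrable_finset_sum _ (fun k hk => hΔint k hk)).const_mul L
      · exact (integrable_const B).add
          ((integrable_finset_sum _ (fun j hj => hδint j hj)).div_const _)
      · exact hmaster
    rw [integral_const_mul, ← h1] at h2
    rw [integral_add (integrable_const B)
      ((integrable_finset_sum _ (fun j hj => hδint j hj)).div_const _)] at h2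
    rw [integral_const] at h2
    simp only [measure_univ, probReal_univ, ENNReal.toReal_one, smul_eq_mul, one_mul] at h2
    rw [integral_div, integral_finset_sum _ (fun j hj => hδint j hj)] at h2
    have h3 : ∑ j ∈ Finset.Icc 1 N, ∫ ωp, ‖δ j ωp‖ ^ 2 ∂μ ≤ (N : ℝ) * (σ ^ 2 / m) := by
      calc ∑ j ∈ Finset.Icc 1 N, ∫ ωp, ‖δ j ωp‖ ^ 2 ∂μ ≤
          ∑ _j ∈ Finset.Icc 1 N, (σ ^ 2 / (m : ℝ)) := Finset.sum_le_sum fun j hj => hδvar j hj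
        _ = (N : ℝ) * (σ ^ 2 / m) := by
          rw [Finset.sum_const, Nat.card_Icc, Nat.add_sub_cancel, nsmul_eq_mul]
    have h4 : (∑ j ∈ Finset.Icc 1 N, ∫ ωp, ‖δ j ωp‖ ^ 2 ∂μ) / (2 * L) ≤
        ((N : ℝ) * (σ ^ 2 / m)) / (2 * L) := by
      apply div_le_div_of_nonneg_right h3 (by positivity) |>.trans_eq rfl
    linarith
  have hT2 : T ≤ B / L + (N : ℝ) * (σ ^ 2 / m) / (2 * L ^ 2) := by
    have e3 : B / L + (N : ℝ) * (σ ^ 2 / m) / (2 * L ^ 2)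
        = (B + (N : ℝ) * (σ ^ 2 / m) / (2 * L)) / L := by
      field_simp
    rw [e3, le_div_iff₀ hL]
    linarith [hTbound]
  -- pointwise rewriting of the scaled norms
  have hscale : ∀ (u v : Ω → E),
      (∫ ωp, ‖c • (u ωp - v ωp)‖ ^ 2 ∂μ) = c ^ 2 * ∫ ωp, ‖u ωp - v ωp‖ ^ 2 ∂μ := by
    intro u v
    rw [← integral_const_mul]
    congr 1
    ext ωp
    rw [norm_smul, mul_pow, Real.norm_eq_abs, sq_abs]
  constructor
  · -- first bound (exact projected gradient)
    have hJ : ∀ k ∈ Finset.Icc 1 N, (∫ ωp, ‖x k ωp - xe k ωp‖ ^ 2 ∂μ) ≤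
        2 * (∫ ωp, ‖x k ωp - x (k + 1) ωp‖ ^ 2 ∂μ) + (σ ^ 2 / m) / (2 * L ^ 2) := by
      intro k hk
      have hptw : ∀ ωp, ‖x k ωp - xe k ωp‖ ^ 2 ≤
          2 * ‖x k ωp - x (k + 1) ωp‖ ^ 2 + ‖δ k ωp‖ ^ 2 / (2 * L ^ 2) := by
        intro ωp
        have hdec : x k ωp - xe k ωp =
            (x k ωp - x (k + 1) ωp) + (x (k + 1) ωp - xe k ωp) := by abel
        have htri : ‖x k ωp - xe k ωp‖ ≤
            ‖x k ωp - x (k + 1) ωp‖ + ‖x (k + 1) ωp - xe k ωp‖ := by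
          rw [hdec]; exact norm_add_le _ _
        have hsq : ‖x k ωp - xe k ωp‖ ^ 2 ≤
            2 * ‖x k ωp - x (k + 1) ωp‖ ^ 2 + 2 * ‖x (k + 1) ωp - xe k ωp‖ ^ 2 := by
          nlinarith [htri, norm_nonneg (x k ωp - xe k ωp),
            norm_nonneg (x k ωp - x (k + 1) ωp), norm_nonneg (x (k + 1) ωp - xe k ωp),
            sq_nonneg (‖x k ωp - x (k + 1) ωp‖ - ‖x (k + 1) ωp - xe k ωp‖)]
        have hrev : ‖x (k + 1) ωp - xe k ωp‖ = ‖xe k ωp - x (k + 1) ωp‖ := norm_sub_rev _ _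
        have hb := hB2 k hk ωp
        have h5 : 2 * ‖x (k + 1) ωp - xe k ωp‖ ^ 2 ≤ ‖δ k ωp‖ ^ 2 / (2 * L ^ 2) := by
          rw [le_div_iff₀ (by positivity), hrev]
          nlinarith [hb]
        linarith
      have hmono : (∫ ωp, ‖x k ωp - xe k ωp‖ ^ 2 ∂μ) ≤
          ∫ ωp, (2 * ‖x k ωp - x (k + 1) ωp‖ ^ 2 + ‖δ k ωp‖ ^ 2 / (2 * L ^ 2)) ∂μ := by
        apply integral_mono_of_nonneg
        · filter_upwards with ωp; positivity
        · exact ((hΔint k hk).const_mul 2).add ((hδint k hk).div_const _)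
        · filter_upwards with ωp; exact hptw ωp
      rw [integral_add ((hΔint k hk).const_mul 2) ((hδint k hk).div_const _),
        integral_const_mul, integral_div] at hmono
      have h6 : (∫ ωp, ‖δ k ωp‖ ^ 2 ∂μ) / (2 * L ^ 2) ≤ (σ ^ 2 / m) / (2 * L ^ 2) :=
        div_le_div_of_nonneg_right (hδvar k hk) (by positivity) |>.trans_eq rfl
      linarith
    calc ∑ k ∈ Finset.Icc 1 N, (1 / (N : ℝ)) *
          ∫ ωp, ‖(1 / (α / (2 * L))) • (x k ωp - xe k ωp)‖ ^ 2 ∂μ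
        = ∑ k ∈ Finset.Icc 1 N, (1 / (N : ℝ)) *
          (c ^ 2 * ∫ ωp, ‖x k ωp - xe k ωp‖ ^ 2 ∂μ) := by
          apply Finset.sum_congr rfl
          intro k hk
          rw [← hcdef, hscale]
      _ ≤ ∑ k ∈ Finset.Icc 1 N, (1 / (N : ℝ)) *
          (c ^ 2 * (2 * (∫ ωp, ‖x k ωp - x (k + 1) ωp‖ ^ 2 ∂μ) + (σ ^ 2 / m) / (2 * L ^ 2))) := by
          apply Finset.sum_le_sum
          intro k hk
          have := hJ k hk
          gcongr
      _ = (1 / (N : ℝ)) * (c ^ 2 * (2 * T + (N : ℝ) * ((σ ^ 2 / m) / (2 * L ^ 2)))) := by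
          rw [← Finset.mul_sum, ← Finset.mul_sum]
          congr 2
          rw [Finset.sum_add_distrib, ← Finset.mul_sum, ← hTdef, Finset.sum_const,
            Nat.card_Icc, Nat.add_sub_cancel, nsmul_eq_mul]
      _ ≤ (1 / (N : ℝ)) * (c ^ 2 * (2 * (B / L + (N : ℝ) * (σ ^ 2 / m) / (2 * L ^ 2))
            + (N : ℝ) * ((σ ^ 2 / m) / (2 * L ^ 2)))) := by
          gcongr
      _ = 8 * L ^ 2 * ((f x₁ + h x₁ - Ψstar) / L) / (α ^ 2 * N) + 6 * σ ^ 2 / (α ^ 2 * m) := by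
          rw [hc2, ← hBdef]
          field_simp
          ring
  · -- second bound (inexact projected gradient)
    calc ∑ k ∈ Finset.Icc 1 N, (1 / (N : ℝ)) *
          ∫ ωp, ‖(1 / (α / (2 * L))) • (x k ωp - x (k + 1) ωp)‖ ^ 2 ∂μ
        = ∑ k ∈ Finset.Icc 1 N, (1 / (N : ℝ)) *
          (c ^ 2 * ∫ ωp, ‖x k ωp - x (k + 1) ωp‖ ^ 2 ∂μ) := by
          apply Finset.sum_congr rfl
          intro k hk
          rw [← hcdef, hscale]
      _ = (1 / (N : ℝ)) * (c ^ 2 * T) := by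
          rw [← Finset.mul_sum, ← Finset.mul_sum, ← hTdef]
      _ ≤ (1 / (N : ℝ)) * (c ^ 2 * (B / L + (N : ℝ) * (σ ^ 2 / m) / (2 * L ^ 2))) := by
          gcongr
      _ = 4 * L ^ 2 * ((f x₁ + h x₁ - Ψstar) / L) / (α ^ 2 * N) + 2 * σ ^ 2 / (α ^ 2 * m) := by
          rw [hc2, ← hBdef]
          field_simp
          ring
end
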